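/- With the notation below, let a, b ∈ {1,2,3} be distinct, let {f_i} be any orthonormal basis of p_{ab} and {e_γ} any orthonormal basis of p_a, both with respect to the inner product ⟨·,·⟩. Then Σ_{i,j,γ} ⟨[f_i, f_j], e_γ⟩² = k_a k_b (2k_a+1)/(n+1), where the sum is over all pairs of basis elements of p_{ab} and all basis elements of p_a. -/

import Mathlib

open Matrix

/-- Total size `n = k₁ + k₂ + k₃`. -/
abbrev blockTotal (k : Fin 3 → ℕ) : ℕ := k 0 + k 1 + k 2

/-- The block to which the index `i ∈ Fin n` belongs, for row/column blocks of sizes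
`k 0, k 1, k 2`. -/
def blockOf (k : Fin 3 → ℕ) (i : Fin (blockTotal k)) : Fin 3 :=
  if (i : ℕ) < k 0 then 0 else if (i : ℕ) < k 0 + k 1 then 1 else 2

/-- The subspace of the compact symplectic Lie algebra `sp(n)` (realized as `2n × 2n` complex
matrices `Z = [[X, −conj Y], [Y, conj X]]` with `X` skew-Hermitian and `Y` complex symmetric)
consisting of those `Z` for which the only possibly nonzero `n × n`-blocks of `X` and of `Y`
are the blocks `(a, b)` with `(a, b) ∈ S`. -/
def spBlockSet (k : Fin 3 → ℕ) (S : Set (Fin 3 × Fin 3)) :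
    Set (Matrix (Fin (blockTotal k) ⊕ Fin (blockTotal k))
      (Fin (blockTotal k) ⊕ Fin (blockTotal k)) ℂ) :=
  { Z | ∃ X Y : Matrix (Fin (blockTotal k)) (Fin (blockTotal k)) ℂ,
      Xᴴ = -X ∧ Yᵀ = Y ∧
      (∀ i j, X i j ≠ 0 → (blockOf k i, blockOf k j) ∈ S) ∧
      (∀ i j, Y i j ≠ 0 → (blockOf k i, blockOf k j) ∈ S) ∧
      Z = Matrix.fromBlocks X (-(Y.map (starRingEnd ℂ))) Y (X.map (starRingEnd ℂ)) }

/-- The subspace `p_a ⊆ sp(n)`: the only possibly nonzero blocks of `X` and `Y` are their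
`(a, a)` blocks. -/
def pDiag (k : Fin 3 → ℕ) (a : Fin 3) := spBlockSet k {(a, a)}

/-- The subspace `p_{ab} ⊆ sp(n)` (for `a ≠ b`): the only possibly nonzero blocks of `X` and
`Y` are their `(a, b)` and `(b, a)` blocks. -/
def pOff (k : Fin 3 → ℕ) (a b : Fin 3) := spBlockSet k {(a, b), (b, a)}

/-- The inner product `⟨Z, W⟩ = −2(n+1)·tr(Z W)` (the negative of the Killing form of
`sp(n)`), with values in `ℂ`; it is real and positive definite on `sp(n)`. -/
noncomputable def spInner (k : Fin 3 → ℕ)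
    (Z W : Matrix (Fin (blockTotal k) ⊕ Fin (blockTotal k))
      (Fin (blockTotal k) ⊕ Fin (blockTotal k)) ℂ) : ℂ :=
  -(2 * ((blockTotal k : ℂ) + 1)) * Matrix.trace (Z * W)

namespace SpAux

variable (k : Fin 3 → ℕ)

abbrev Idx := Fin (blockTotal k) ⊕ Fin (blockTotal k)

abbrev Mat := Matrix (Idx k) (Idx k) ℂ

def blk : Idx k → Fin 3 := Sum.elim (blockOf k) (blockOf k)

noncomputable def Jm : Mat k := fromBlocks 0 1 (-1) 0

def prt : Idx k → Idx k := Sum.elim Sum.inr Sum.inl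

variable {k}

lemma blk_prt (p : Idx k) : blk k (prt k p) = blk k p := by
  cases p <;> rfl

lemma prt_inj {p q : Idx k} (h : prt k p = prt k q) : p = q := by
  cases p <;> cases q <;> simp [prt] at h <;> simp [h]

lemma Jm_eq_zero_of_ne {p q : Idx k} (h : q ≠ prt k p) : Jm k p q = 0 := by
  cases p with
  | inl i => cases q with
    | inl j => rfl
    | inr j =>
        have : i ≠ j := by rintro rfl; exact h rfl
        simp [Jm, fromBlocks, Matrix.one_apply, this]
  | inr i => cases q with
    | inl j =>
        have : i ≠ j := by rintro rfl; exact h rfl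
        simp [Jm, fromBlocks, Matrix.one_apply, this]
    | inr j => rfl

lemma Jm_prt_mul_self (p : Idx k) : Jm k p (prt k p) * Jm k p (prt k p) = 1 := by
  cases p <;> simp [Jm, prt, fromBlocks, Matrix.one_apply]

lemma Jm_zero_of_blk_ne {p q : Idx k} (h : blk k p ≠ blk k q) : Jm k p q = 0 := by
  apply Jm_eq_zero_of_ne
  rintro rfl
  exact h (blk_prt p).symm

lemma Jm_mul_Jm : Jm k * Jm k = -1 := by
  simp [Jm, fromBlocks_multiply]
  ext (i|i) (j|j) <;> simp [fromBlocks, Matrix.one_apply]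

lemma Jm_transpose : (Jm k)ᵀ = - Jm k := by
  ext (i|i) (j|j) <;> simp [Jm, fromBlocks, Matrix.one_apply, Matrix.transpose_apply, eq_comm]

lemma Jm_skew (p q : Idx k) : Jm k p q = - Jm k q p := by
  have := congrFun (congrFun (Jm_transpose (k := k)) p) q
  simp only [Matrix.transpose_apply, Matrix.neg_apply] at this
  rw [this]; ring


lemma Jm_Jm_left (X : Mat k) : Jm k * (Jm k * X) = -X := by
  rw [← Matrix.mul_assoc, Jm_mul_Jm]; simp

lemma Jm_conjTranspose : (Jm k)ᴴ = - Jm k := by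
  ext p q
  cases p <;> cases q <;>
    simp [Matrix.conjTranspose_apply, Jm, fromBlocks, Matrix.one_apply] <;>
    split <;> simp_all [eq_comm]

variable (k) in
noncomputable def sg (M : Mat k) : Mat k := Jm k * Mᵀ * Jm k

lemma Jm_Jm_right (X : Mat k) : X * (Jm k * Jm k) = -X := by rw [Jm_mul_Jm]; simp

lemma sg_sg (M : Mat k) : sg k (sg k M) = M := by
  unfold sg
  simp [Matrix.transpose_mul, Jm_transpose, Matrix.transpose_transpose, Matrix.mul_assoc,
    Matrix.neg_mul, Matrix.mul_neg, Jm_Jm_left, Jm_Jm_right, neg_neg]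

lemma trace_sg_mul (A B : Mat k) : ((sg k A) * B).trace = (A * (sg k B)).trace := by
  unfold sg
  calc (Jm k * Aᵀ * Jm k * B).trace = ((Aᵀ * (Jm k * B * Jm k))).trace := by
        rw [show Jm k * Aᵀ * Jm k * B = Jm k * (Aᵀ * (Jm k * B)) by
          simp only [Matrix.mul_assoc], Matrix.trace_mul_comm]
        simp only [Matrix.mul_assoc]
    _ = ((Jm k * B * Jm k)ᵀ * Aᵀᵀ).trace := by
        rw [← Matrix.trace_transpose, Matrix.transpose_mul]
    _ = (A * (Jm k * Bᵀ * Jm k)).trace := by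
        rw [Matrix.transpose_transpose]
        rw [Matrix.trace_mul_comm]
        congr 1
        simp only [Matrix.transpose_mul, Jm_transpose, Matrix.mul_assoc, Matrix.neg_mul,
          Matrix.mul_neg, neg_neg, Matrix.transpose_transpose]

lemma sg_smul (c : ℂ) (M : Mat k) : sg k (c • M) = c • sg k M := by
  simp [sg, Matrix.transpose_smul, Matrix.smul_mul, Matrix.mul_smul]

lemma sg_add (M N : Mat k) : sg k (M + N) = sg k M + sg k N := by
  simp [sg, Matrix.transpose_add, Matrix.add_mul, Matrix.mul_add]

lemma sg_sub (M N : Mat k) : sg k (M - N) = sg k M - sg k N := by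
  simp [sg, Matrix.transpose_sub, Matrix.sub_mul, Matrix.mul_sub]

lemma sg_conjTranspose' (M : Mat k) : sg k (Mᴴ) = (sg k M)ᴴ := by
  unfold sg
  rw [Matrix.conjTranspose_mul, Matrix.conjTranspose_mul, Jm_conjTranspose]
  have hMT : (Mᵀ)ᴴ = (Mᴴ)ᵀ := by
    ext p q; simp [Matrix.conjTranspose_apply, Matrix.transpose_apply]
  rw [hMT]
  simp only [Matrix.neg_mul, Matrix.mul_neg, neg_neg, Matrix.mul_assoc]

lemma sg_conjTranspose (M : Mat k) (h : sg k M = M) : sg k (Mᴴ) = Mᴴ := by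
  rw [sg_conjTranspose', h]

lemma sg_mul (X Y : Mat k) : sg k (X * Y) = -(sg k Y * sg k X) := by
  unfold sg
  simp [Matrix.transpose_mul, Matrix.mul_assoc, Jm_Jm_left, Jm_Jm_right,
    Matrix.mul_neg, Matrix.neg_mul, neg_neg]

lemma sg_mul_neg {X Y : Mat k} (hX : sg k X = X) (hY : sg k Y = Y) :
    sg k (X * Y) = - (Y * X) := by
  rw [sg_mul, hX, hY]

lemma sg_bracket {A B : Mat k} (hA : sg k A = A) (hB : sg k B = B) :
    sg k (A * B - B * A) = A * B - B * A := by
  rw [sg_sub, sg_mul_neg hA hB, sg_mul_neg hB hA]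
  abel


lemma sg_fromBlocks (A B C D : Matrix (Fin (blockTotal k)) (Fin (blockTotal k)) ℂ) :
    sg k (fromBlocks A B C D) = fromBlocks (-Dᵀ) Bᵀ Cᵀ (-Aᵀ) := by
  unfold sg Jm
  rw [fromBlocks_transpose, fromBlocks_multiply, fromBlocks_multiply]
  simp

lemma skew_entry {X : Matrix (Fin (blockTotal k)) (Fin (blockTotal k)) ℂ}
    (hX : Xᴴ = -X) (i j : Fin (blockTotal k)) : star (X i j) = - X j i := by
  have := congrFun (congrFun hX j) i
  simpa [Matrix.conjTranspose_apply, Matrix.neg_apply] using this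

lemma mem_supp {S : Set (Fin 3 × Fin 3)} {Z : Mat k} (h : Z ∈ spBlockSet k S) :
    ∀ p q, Z p q ≠ 0 → (blk k p, blk k q) ∈ S := by
  obtain ⟨X, Y, hX, hY, hXs, hYs, rfl⟩ := h
  rintro (i|i) (j|j) hpq
  · exact hXs i j (by simpa [fromBlocks_apply₁₁] using hpq)
  · refine hYs i j fun h0 => hpq ?_
    rw [fromBlocks_apply₁₂]
    simp [Matrix.map_apply, h0]
  · exact hYs i j (by simpa [fromBlocks_apply₂₁] using hpq)
  · refine hXs i j fun h0 => hpq ?_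
    rw [fromBlocks_apply₂₂]
    simp [Matrix.map_apply, h0]

lemma mem_sg {S : Set (Fin 3 × Fin 3)} {Z : Mat k} (h : Z ∈ spBlockSet k S) :
    sg k Z = Z := by
  obtain ⟨X, Y, hX, hY, _, _, rfl⟩ := h
  rw [sg_fromBlocks, fromBlocks_inj]
  refine ⟨?_, ?_, hY, ?_⟩
  · ext i j
    simp only [Matrix.neg_apply, Matrix.transpose_apply, Matrix.map_apply, starRingEnd_apply]
    rw [skew_entry hX j i]
    simp
  · ext i j
    have hYe : Y j i = Y i j := congrFun (congrFun hY i) j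
    simp [Matrix.transpose_apply, Matrix.neg_apply, Matrix.map_apply, hYe]
  · ext i j
    simp only [Matrix.neg_apply, Matrix.transpose_apply, Matrix.map_apply, starRingEnd_apply]
    rw [skew_entry hX i j]

lemma mem_skew {S : Set (Fin 3 × Fin 3)} {Z : Mat k} (h : Z ∈ spBlockSet k S) :
    Zᴴ = -Z := by
  obtain ⟨X, Y, hX, hY, _, _, rfl⟩ := h
  rw [fromBlocks_conjTranspose, fromBlocks_neg, fromBlocks_inj]
  have hYe : ∀ i j, Y j i = Y i j := fun i j => congrFun (congrFun hY i) j
  refine ⟨hX, ?_, ?_, ?_⟩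
  · ext i j
    simp only [Matrix.conjTranspose_apply, Matrix.neg_apply, Matrix.map_apply, starRingEnd_apply,
      neg_neg]
    rw [hYe i j]
  · ext i j
    simp only [Matrix.conjTranspose_apply, Matrix.neg_apply, Matrix.map_apply, starRingEnd_apply,
      star_star]
    rw [hYe i j]
    simp
  · ext i j
    simp only [Matrix.conjTranspose_apply, Matrix.neg_apply, Matrix.map_apply, starRingEnd_apply,
      star_star]
    rw [skew_entry hX i j]
    simp

lemma mem_of_conditions {S : Set (Fin 3 × Fin 3)} {Z : Mat k}
    (hsupp : ∀ p q, Z p q ≠ 0 → (blk k p, blk k q) ∈ S)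
    (hsg : sg k Z = Z) (hth : Zᴴ = -Z) : Z ∈ spBlockSet k S := by
  set A := Z.toBlocks₁₁ with hA
  set B := Z.toBlocks₁₂ with hB
  set C := Z.toBlocks₂₁ with hC
  set D := Z.toBlocks₂₂ with hD
  have hZ : Z = fromBlocks A B C D := (fromBlocks_toBlocks Z).symm
  rw [hZ, sg_fromBlocks, fromBlocks_inj] at hsg
  rw [hZ, fromBlocks_conjTranspose, fromBlocks_neg, fromBlocks_inj] at hth
  obtain ⟨e11, e12, e21, e22⟩ := hsg
  obtain ⟨t11, t12, t21, t22⟩ := hth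
  refine ⟨A, C, t11, e21, ?_, ?_, ?_⟩
  · intro i j hij
    exact hsupp (Sum.inl i) (Sum.inl j) (by rw [hZ, fromBlocks_apply₁₁]; exact hij)
  · intro i j hij
    exact hsupp (Sum.inr i) (Sum.inl j) (by rw [hZ, fromBlocks_apply₂₁]; exact hij)
  · rw [hZ, fromBlocks_inj]
    refine ⟨rfl, ?_, rfl, ?_⟩
    · -- B = -(C.map conj)
      ext i j
      have h1 := congrFun (congrFun t12 i) j
      simp only [Matrix.conjTranspose_apply, Matrix.neg_apply] at h1
      have hCe : C j i = C i j := congrFun (congrFun e21 i) j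
      simp only [Matrix.neg_apply, Matrix.map_apply, starRingEnd_apply, ← hCe]
      rw [h1]
      simp
    · -- D = A.map conj
      ext i j
      have hD' : D i j = - A j i := by
        have := congrFun (congrFun e11 j) i
        simp only [Matrix.neg_apply, Matrix.transpose_apply] at this
        rw [← this]
        simp
      simp only [Matrix.map_apply, starRingEnd_apply]
      rw [hD']
      exact (skew_entry t11 i j).symm


lemma spInner_symm (Z W : Mat k) : spInner k Z W = spInner k W Z := by
  unfold spInner; rw [Matrix.trace_mul_comm]

lemma spInner_add_left (A B C : Mat k) :
    spInner k (A + B) C = spInner k A C + spInner k B C := by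
  unfold spInner; rw [Matrix.add_mul, Matrix.trace_add]; ring

lemma spInner_smul_left (c : ℂ) (A B : Mat k) :
    spInner k (c • A) B = c * spInner k A B := by
  unfold spInner; rw [Matrix.smul_mul, Matrix.trace_smul, smul_eq_mul]; ring

lemma spInner_zero_left (B : Mat k) : spInner k 0 B = 0 := by
  unfold spInner; rw [Matrix.zero_mul, Matrix.trace_zero]; ring

lemma repro {ι : Type} [Fintype ι] [DecidableEq ι] {g : ι → Mat k}
    (honb : ∀ i j, spInner k (g i) (g j) = if i = j then 1 else 0)
    (W' : Mat k) {W : Mat k} (hW : W ∈ Submodule.span ℂ (Set.range g)) :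
    ∑ i, spInner k W (g i) * spInner k W' (g i) = spInner k W W' := by
  induction hW using Submodule.span_induction with
  | mem x hx =>
      obtain ⟨m, rfl⟩ := hx
      have step : ∀ i, spInner k (g m) (g i) * spInner k W' (g i)
          = (if m = i then spInner k W' (g i) else 0) := by
        intro i
        rw [honb]
        split <;> simp
      rw [Finset.sum_congr rfl fun i _ => step i, Finset.sum_ite_eq]
      simp [spInner_symm]
  | zero => simp [spInner_zero_left]
  | add x y hx hy ihx ihy =>
      simp only [spInner_add_left, add_mul, Finset.sum_add_distrib, ihx, ihy]
  | smul c x hx ih =>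
      simp only [spInner_smul_left, mul_assoc, ← Finset.mul_sum, ih]

lemma mem_spanC {S : Set (Fin 3 × Fin 3)} (hS : ∀ p, p ∈ S → Prod.swap p ∈ S)
    {ι : Type} {g : ι → Mat k}
    (hg : ∀ Z ∈ spBlockSet k S, Z ∈ Submodule.span ℝ (Set.range g))
    {M : Mat k} (hsupp : ∀ p q, M p q ≠ 0 → (blk k p, blk k q) ∈ S)
    (hsg : sg k M = M) : M ∈ Submodule.span ℂ (Set.range g) := by
  have hsgH : sg k (Mᴴ) = Mᴴ := sg_conjTranspose M hsg
  have hsuppH : ∀ p q, (Mᴴ) p q ≠ 0 → (blk k p, blk k q) ∈ S := by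
    intro p q h
    have : M q p ≠ 0 := by
      simp only [Matrix.conjTranspose_apply, ne_eq, star_eq_zero] at h
      exact h
    have := hS _ (hsupp q p this)
    simpa using this
  set Z₁ : Mat k := (1/2 : ℂ) • (M - Mᴴ) with hZ₁def
  set Z₂ : Mat k := (-(Complex.I/2)) • (M + Mᴴ) with hZ₂def
  have hZ₁mem : Z₁ ∈ spBlockSet k S := by
    apply mem_of_conditions
    · intro p q h
      simp only [hZ₁def, Matrix.smul_apply, Matrix.sub_apply, smul_eq_mul] at h
      by_cases h1 : M p q ≠ 0
      · exact hsupp _ _ h1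
      · push_neg at h1
        apply hsuppH p q
        intro h2
        apply h
        rw [h1, h2]
        ring
    · rw [hZ₁def, sg_smul, sg_sub, hsg, hsgH]
    · rw [hZ₁def, Matrix.conjTranspose_smul, Matrix.conjTranspose_sub,
        Matrix.conjTranspose_conjTranspose]
      rw [show star (1/2 : ℂ) = (1/2 : ℂ) by norm_num]
      rw [show (Mᴴ - M) = -(M - Mᴴ) by abel, smul_neg]
  have hZ₂mem : Z₂ ∈ spBlockSet k S := by
    apply mem_of_conditions
    · intro p q h
      simp only [hZ₂def, Matrix.smul_apply, Matrix.add_apply, smul_eq_mul] at h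
      by_cases h1 : M p q ≠ 0
      · exact hsupp _ _ h1
      · push_neg at h1
        apply hsuppH p q
        intro h2
        apply h
        rw [h1, h2]
        ring
    · rw [hZ₂def, sg_smul, sg_add, hsg, hsgH]
    · rw [hZ₂def, Matrix.conjTranspose_smul, Matrix.conjTranspose_add,
        Matrix.conjTranspose_conjTranspose]
      rw [show star (-(Complex.I/2) : ℂ) = (Complex.I/2 : ℂ) by
        simp [Complex.star_def]; ring]
      rw [show (Mᴴ + M) = (M + Mᴴ) by abel, neg_smul, neg_neg]
  have hdecomp : M = Z₁ + Complex.I • Z₂ := by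
    rw [hZ₁def, hZ₂def, smul_smul]
    rw [show Complex.I * -(Complex.I/2) = (1/2 : ℂ) by
      rw [show Complex.I * -(Complex.I/2) = -((Complex.I*Complex.I)/2) by ring,
        Complex.I_mul_I]
      norm_num]
    ext p q
    simp only [Matrix.add_apply, Matrix.smul_apply, Matrix.sub_apply, smul_eq_mul]
    ring
  have hR : ∀ Z : Mat k, Z ∈ Submodule.span ℝ (Set.range g) →
      Z ∈ Submodule.span ℂ (Set.range g) := by
    intro Z hZ
    have : Submodule.span ℝ (Set.range g)
        ≤ (Submodule.span ℂ (Set.range g)).restrictScalars ℝ := by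
      rw [Submodule.span_le]
      intro x hx
      exact Submodule.subset_span hx
    exact this hZ
  rw [hdecomp]
  exact Submodule.add_mem _ (hR _ (hg _ hZ₁mem))
    (Submodule.smul_mem _ _ (hR _ (hg _ hZ₂mem)))


lemma single_apply (x y u v : Idx k) :
    Matrix.single x y (1:ℂ) u v = if x = u ∧ y = v then 1 else 0 := rfl

lemma trace_single_mul (x y : Idx k) (B : Mat k) :
    (Matrix.single x y (1:ℂ) * B).trace = B y x := by
  unfold Matrix.trace
  simp [Matrix.diag, Matrix.mul_apply, single_apply, ite_and]

lemma trace_mul_single (A : Mat k) (x y : Idx k) :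
    (A * Matrix.single x y (1:ℂ)).trace = A y x := by
  rw [Matrix.trace_mul_comm, trace_single_mul]

lemma trace_single (x y : Idx k) :
    (Matrix.single x y (1:ℂ)).trace = if x = y then 1 else 0 := by
  unfold Matrix.trace
  simp [Matrix.diag, single_apply, ite_and, eq_comm]

lemma single_transpose (x y : Idx k) :
    (Matrix.single x y (1:ℂ))ᵀ = Matrix.single y x 1 := by
  ext u v
  simp [Matrix.transpose_apply, single_apply, and_comm]

lemma JsJ_apply (z w u v : Idx k) :
    (Jm k * Matrix.single z w (1:ℂ) * Jm k) u v = Jm k u z * Jm k w v := by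
  simp [Matrix.mul_apply, single_apply, ite_and, Finset.sum_ite_eq]
        
variable (k) in
noncomputable def PE (q p : Idx k) : Mat k :=
  (1/2 : ℂ) • (Matrix.single q p 1 + Jm k * Matrix.single p q 1 * Jm k)

lemma sg_single (q p : Idx k) :
    sg k (Matrix.single q p (1:ℂ)) = Jm k * Matrix.single p q 1 * Jm k := by
  unfold sg
  rw [single_transpose]

lemma sg_PE (q p : Idx k) : sg k (PE k q p) = PE k q p := by
  unfold PE
  rw [sg_smul, sg_add, sg_single, ← sg_single q p, sg_sg, add_comm]

lemma PE_supp {S : Set (Fin 3 × Fin 3)} {q p : Idx k}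
    (hqp : (blk k q, blk k p) ∈ S) (hS : ∀ x, x ∈ S → Prod.swap x ∈ S) :
    ∀ u v, PE k q p u v ≠ 0 → (blk k u, blk k v) ∈ S := by
  intro u v h
  unfold PE at h
  simp only [Matrix.smul_apply, Matrix.add_apply, smul_eq_mul] at h
  rw [JsJ_apply, single_apply] at h
  by_cases h1 : q = u ∧ p = v
  · obtain ⟨rfl, rfl⟩ := h1
    exact hqp
  · have h2 : Jm k u p * Jm k q v ≠ 0 := by
      intro h0
      apply h
      rw [if_neg h1, h0]
      ring
    have hup : Jm k u p ≠ 0 := fun h0 => h2 (by rw [h0]; ring)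
    have hqv : Jm k q v ≠ 0 := fun h0 => h2 (by rw [h0]; ring)
    have b1 : blk k u = blk k p := by
      by_contra hb
      exact hup (Jm_zero_of_blk_ne hb)
    have b2 : blk k q = blk k v := by
      by_contra hb
      exact hqv (Jm_zero_of_blk_ne hb)
    rw [b1, ← b2]
    exact hS _ hqp

lemma PE_mem_span {S : Set (Fin 3 × Fin 3)} (hS : ∀ x, x ∈ S → Prod.swap x ∈ S)
    {ι : Type} {g : ι → Mat k}
    (hg : ∀ Z ∈ spBlockSet k S, Z ∈ Submodule.span ℝ (Set.range g))
    {q p : Idx k} (hqp : (blk k q, blk k p) ∈ S) :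
    PE k q p ∈ Submodule.span ℂ (Set.range g) :=
  mem_spanC hS hg (PE_supp hqp hS) (sg_PE q p)

lemma inner_PE {Z : Mat k} (hZ : sg k Z = Z) (q p : Idx k) :
    spInner k (PE k q p) Z = -(2 * ((blockTotal k : ℂ) + 1)) * Z p q := by
  rw [spInner_symm]
  unfold spInner PE
  rw [Matrix.mul_smul, Matrix.trace_smul, Matrix.mul_add, Matrix.trace_add]
  rw [← sg_single, show (Z * sg k (Matrix.single q p 1)).trace
      = (sg k Z * Matrix.single q p 1).trace from (trace_sg_mul Z _).symm, hZ]
  rw [trace_mul_single]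
  rw [smul_eq_mul]
  ring

lemma P3 (q p r : Idx k) :
    spInner k (PE k q p) (PE k r q)
      = -((blockTotal k : ℂ) + 1) * ((if p = r then 1 else 0) + Jm k p q * Jm k r q) := by
  unfold spInner PE
  rw [Matrix.smul_mul, Matrix.mul_smul, Matrix.trace_smul, Matrix.trace_smul]
  rw [Matrix.add_mul, Matrix.mul_add, Matrix.mul_add, Matrix.trace_add, Matrix.trace_add,
    Matrix.trace_add]
  have t1 : (Matrix.single q p (1:ℂ) * Matrix.single r q 1).trace
      = if p = r then 1 else 0 := by
    by_cases h : p = r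
    · subst h
      rw [Matrix.single_mul_single_same, Matrix.trace_single_eq_same]
      simp
    · rw [Matrix.single_mul_single_of_ne (h := h), Matrix.trace_zero, if_neg h]
  have t2 : (Matrix.single q p (1:ℂ) * (Jm k * Matrix.single q r 1 * Jm k)).trace
      = Jm k p q * Jm k r q := by
    rw [trace_single_mul, JsJ_apply]
  have t3 : (Jm k * Matrix.single p q (1:ℂ) * Jm k * Matrix.single r q 1).trace
      = Jm k p q * Jm k r q := by
    rw [trace_mul_single, JsJ_apply]
    rw [Jm_skew q p, Jm_skew q r]
    ring
  have t4 : (Jm k * Matrix.single p q (1:ℂ) * Jm k * (Jm k * Matrix.single q r 1 * Jm k)).trace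
      = if p = r then 1 else 0 := by
    have assoc : Jm k * Matrix.single p q (1:ℂ) * Jm k * (Jm k * Matrix.single q r 1 * Jm k)
        = Jm k * (Matrix.single p q 1 * (Jm k * (Jm k * (Matrix.single q r 1 * Jm k)))) := by
      simp only [Matrix.mul_assoc]
    rw [assoc, Jm_Jm_left]
    have step : Matrix.single p q (1:ℂ) * -(Matrix.single q r 1 * Jm k)
        = -((Matrix.single p q 1 * Matrix.single q r 1) * Jm k) := by
      simp only [Matrix.mul_neg, Matrix.mul_assoc]
    rw [step, Matrix.mul_neg, Matrix.trace_neg, Matrix.trace_mul_comm]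
    rw [Matrix.mul_assoc (Matrix.single p q 1 * Matrix.single q r 1) (Jm k) (Jm k),
      Jm_Jm_right, Matrix.trace_neg, neg_neg]
    rw [Matrix.single_mul_single_same]
    rw [show (1:ℂ)*1 = 1 from one_mul 1, trace_single]
  rw [t1, t2, t3, t4]
  rw [smul_eq_mul, smul_eq_mul]
  by_cases h : p = r <;> simp [h] <;> ring


lemma Ncast_ne : ((blockTotal k : ℂ) + 1) ≠ 0 := Nat.cast_add_one_ne_zero _

lemma moment {S : Set (Fin 3 × Fin 3)} (hS : ∀ x ∈ S, Prod.swap x ∈ S)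
    {ι : Type} [Fintype ι] [DecidableEq ι] {g : ι → Mat k}
    (hmem : ∀ i, g i ∈ spBlockSet k S)
    (hspan : ∀ Z ∈ spBlockSet k S, Z ∈ Submodule.span ℝ (Set.range g))
    (honb : ∀ i j, spInner k (g i) (g j) = if i = j then 1 else 0)
    {p q r : Idx k} (h1 : (blk k p, blk k q) ∈ S) (h2 : (blk k q, blk k r) ∈ S) :
    ∑ i, g i p q * g i q r
      = -((if p = r then (1:ℂ) else 0) + Jm k p q * Jm k r q)
          / (4*((blockTotal k : ℂ)+1)) := by
  have hN : ((blockTotal k : ℂ) + 1) ≠ 0 := Ncast_ne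
  set c : ℂ := -(2 * ((blockTotal k : ℂ) + 1)) with hc
  have hc0 : c ≠ 0 := by
    rw [hc]
    simp only [ne_eq, neg_eq_zero, mul_eq_zero]
    push_neg
    exact ⟨two_ne_zero, hN⟩
  have hqp : (blk k q, blk k p) ∈ S := by
    have := hS _ h1
    simpa using this
  have hrq : (blk k r, blk k q) ∈ S := by
    have := hS _ h2
    simpa using this
  have hstep : ∀ i, g i p q * g i q r
      = (spInner k (PE k q p) (g i) * spInner k (PE k r q) (g i)) / (c*c) := by
    intro i
    rw [inner_PE (mem_sg (hmem i)) q p, inner_PE (mem_sg (hmem i)) r q, ← hc]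
    field_simp
  rw [Finset.sum_congr rfl fun i _ => hstep i, ← Finset.sum_div]
  rw [repro honb (PE k r q) (PE_mem_span hS hspan hqp), P3]
  rw [hc]
  have key : ∀ n t u : ℂ, n ≠ 0 →
      (-n * (t + u)) / (-(2*n) * -(2*n)) = -(t+u)/(4*n) := by
    intro n t u hn
    field_simp
    ring
  exact key _ _ _ hN

lemma inv_id (x y z : Mat k) :
    spInner k (x*y - y*x) z = spInner k y (z*x - x*z) := by
  unfold spInner
  rw [Matrix.sub_mul, Matrix.mul_sub, Matrix.trace_sub, Matrix.trace_sub]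
  have h1 : (y*(z*x)).trace = ((x*y)*z).trace := by
    rw [← Matrix.mul_assoc, Matrix.trace_mul_cycle]
  have h2 : (y*(x*z)).trace = ((y*x)*z).trace := by
    rw [Matrix.mul_assoc]
  rw [h1, h2]

lemma efe_zero {a b : Fin 3} (hab : a ≠ b) {eM fM : Mat k}
    (hesupp : ∀ p q, eM p q ≠ 0 → blk k p = a ∧ blk k q = a)
    (hfsupp : ∀ p q, fM p q ≠ 0 →
      (blk k p, blk k q) ∈ ({(a,b),(b,a)} : Set (Fin 3 × Fin 3))) :
    eM * fM * eM = 0 := by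
  ext u v
  rw [Matrix.mul_apply, Matrix.zero_apply]
  apply Finset.sum_eq_zero
  intro s _
  by_cases hsv : eM s v = 0
  · rw [hsv, mul_zero]
  · rw [Matrix.mul_apply]
    have hsa : blk k s = a := (hesupp s v hsv).1
    have : ∀ r ∈ Finset.univ, eM u r * fM r s = 0 := by
      intro r _
      by_cases hur : eM u r = 0
      · rw [hur, zero_mul]
      · have hra : blk k r = a := (hesupp u r hur).2
        have hfz : fM r s = 0 := by
          by_contra hf
          have := hfsupp r s hf
          rw [hra, hsa] at this
          simp only [Set.mem_insert_iff, Set.mem_singleton_iff, Prod.mk.injEq] at this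
          rcases this with ⟨_, h⟩ | ⟨h, _⟩ <;> exact hab h
        rw [hfz, mul_zero]
    rw [Finset.sum_eq_zero this, zero_mul]

lemma bracket_inner (eM fM : Mat k) (hefe : eM * fM * eM = 0) :
    spInner k (eM*fM - fM*eM) (eM*fM - fM*eM)
      = 4*((blockTotal k : ℂ)+1) * (eM*eM*(fM*fM)).trace := by
  unfold spInner
  rw [Matrix.sub_mul, Matrix.mul_sub, Matrix.mul_sub, Matrix.trace_sub, Matrix.trace_sub,
    Matrix.trace_sub]
  have hAA : ((eM*fM)*(eM*fM)).trace = 0 := by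
    rw [show (eM*fM)*(eM*fM) = (eM*fM*eM)*fM by simp only [Matrix.mul_assoc], hefe,
      Matrix.zero_mul, Matrix.trace_zero]
  have hBB : ((fM*eM)*(fM*eM)).trace = 0 := by
    rw [show (fM*eM)*(fM*eM) = fM*(eM*fM*eM) by simp only [Matrix.mul_assoc], hefe,
      Matrix.mul_zero, Matrix.trace_zero]
  have hAB : ((eM*fM)*(fM*eM)).trace = (eM*eM*(fM*fM)).trace := by
    rw [show (eM*fM)*(fM*eM) = (eM*(fM*fM))*eM by simp only [Matrix.mul_assoc],
      Matrix.trace_mul_comm,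
      show eM*(eM*(fM*fM)) = eM*eM*(fM*fM) by simp only [Matrix.mul_assoc]]
  have hBA : ((fM*eM)*(eM*fM)).trace = (eM*eM*(fM*fM)).trace := by
    rw [show (fM*eM)*(eM*fM) = (fM*(eM*eM))*fM by simp only [Matrix.mul_assoc],
      Matrix.trace_mul_comm,
      show fM*(fM*(eM*eM)) = fM*fM*(eM*eM) by simp only [Matrix.mul_assoc],
      Matrix.trace_mul_comm]
  rw [hAA, hBB, hAB, hBA]
  ring

lemma bracket_supp {a b : Fin 3} (hab : a ≠ b) {eM fM : Mat k}
    (hesupp : ∀ p q, eM p q ≠ 0 → blk k p = a ∧ blk k q = a)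
    (hfsupp : ∀ p q, fM p q ≠ 0 →
      (blk k p, blk k q) ∈ ({(a,b),(b,a)} : Set (Fin 3 × Fin 3))) :
    ∀ p q, (eM*fM - fM*eM) p q ≠ 0 →
      (blk k p, blk k q) ∈ ({(a,b),(b,a)} : Set (Fin 3 × Fin 3)) := by
  intro p q h
  rw [Matrix.sub_apply] at h
  have : (eM*fM) p q ≠ 0 ∨ (fM*eM) p q ≠ 0 := by
    by_contra hcon
    push_neg at hcon
    rw [hcon.1, hcon.2, sub_zero] at h
    exact h rfl
  rcases this with h' | h'
  · rw [Matrix.mul_apply] at h'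
    obtain ⟨r, _, hr⟩ := Finset.exists_ne_zero_of_sum_ne_zero h'
    have he' : eM p r ≠ 0 := fun h0 => hr (by rw [h0, zero_mul])
    have hf' : fM r q ≠ 0 := fun h0 => hr (by rw [h0, mul_zero])
    have hpa : blk k p = a := (hesupp p r he').1
    have hra : blk k r = a := (hesupp p r he').2
    have := hfsupp r q hf'
    rw [hra] at this
    simp only [Set.mem_insert_iff, Set.mem_singleton_iff, Prod.mk.injEq] at this ⊢
    rcases this with ⟨_, hqb⟩ | ⟨hba, _⟩
    · exact Or.inl ⟨hpa, hqb⟩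
    · exact absurd hba hab
  · rw [Matrix.mul_apply] at h'
    obtain ⟨r, _, hr⟩ := Finset.exists_ne_zero_of_sum_ne_zero h'
    have hf' : fM p r ≠ 0 := fun h0 => hr (by rw [h0, zero_mul])
    have he' : eM r q ≠ 0 := fun h0 => hr (by rw [h0, mul_zero])
    have hra : blk k r = a := (hesupp r q he').1
    have hqa : blk k q = a := (hesupp r q he').2
    have := hfsupp p r hf'
    rw [hra] at this
    simp only [Set.mem_insert_iff, Set.mem_singleton_iff, Prod.mk.injEq] at this ⊢
    rcases this with ⟨_, hab'⟩ | ⟨hpb, _⟩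
    · exact absurd hab' hab
    · exact Or.inr ⟨hpb, hqa⟩


variable (k) in
def ofn : Fin 3 → ℕ := ![0, k 0, k 0 + k 1]

lemma blockOf_iff (c : Fin 3) (i : Fin (blockTotal k)) :
    blockOf k i = c ↔ ofn k c ≤ (i:ℕ) ∧ (i:ℕ) < ofn k c + k c := by
  have hi := i.isLt
  simp only [blockTotal] at hi
  unfold blockOf ofn
  fin_cases c <;> split_ifs <;>
    simp_all [Fin.ext_iff, Matrix.cons_val_zero, Matrix.cons_val_one] <;> omega

lemma card_blockOf (c : Fin 3) :
    ((Finset.univ.filter fun i : Fin (blockTotal k) => blockOf k i = c).card) = k c := by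
  have hle : ofn k c + k c ≤ blockTotal k := by
    fin_cases c <;> simp [ofn, blockTotal] <;> omega
  rw [show k c = (Finset.univ : Finset (Fin (k c))).card by simp]
  refine Finset.card_bij'
    (fun x hx => (⟨(x:ℕ) - ofn k c, by
      have hx' : blockOf k x = c := by simpa using hx
      have := (blockOf_iff c x).1 hx'
      omega⟩ : Fin (k c)))
    (fun y _ => (⟨ofn k c + (y:ℕ), by have := y.isLt; omega⟩ : Fin (blockTotal k)))
    ?_ ?_ ?_ ?_
  · intro x hx
    simp
  · intro y hy
    simp only [Finset.mem_filter, Finset.mem_univ, true_and]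
    rw [blockOf_iff]
    have := y.isLt
    constructor <;> simp <;> omega
  · intro x hx
    have hx' : blockOf k x = c := by simpa using hx
    have := (blockOf_iff c x).1 hx'
    ext
    simp
    omega
  · intro y hy
    ext
    simp

lemma sum_ind_fin (c : Fin 3) :
    ∑ i : Fin (blockTotal k), (if blockOf k i = c then (1:ℂ) else 0) = (k c : ℂ) := by
  rw [Finset.sum_boole, card_blockOf]

lemma sum_ind (c : Fin 3) :
    ∑ x : Idx k, (if blk k x = c then (1:ℂ) else 0) = 2*(k c : ℂ) := by
  rw [Fintype.sum_sum_type]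
  have h1 : ∀ i : Fin (blockTotal k), blk k (Sum.inl i) = blockOf k i := fun _ => rfl
  have h2 : ∀ i : Fin (blockTotal k), blk k (Sum.inr i) = blockOf k i := fun _ => rfl
  simp only [h1, h2]
  rw [sum_ind_fin]
  ring

lemma sum_J (c : Fin 3) (p r : Idx k) :
    ∑ q : Idx k, (if blk k q = c then Jm k p q * Jm k r q else 0)
      = if p = r ∧ blk k p = c then 1 else 0 := by
  rw [Finset.sum_eq_single (prt k p)]
  · rw [blk_prt]
    by_cases hpr : p = r
    · subst hpr
      by_cases hc : blk k p = c
      · rw [if_pos hc, if_pos ⟨rfl, hc⟩, Jm_prt_mul_self]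
      · rw [if_neg hc, if_neg (by tauto)]
    · have hz : Jm k r (prt k p) = 0 :=
        Jm_eq_zero_of_ne (fun h => hpr (prt_inj h))
      rw [hz, mul_zero]
      simp [hpr]
  · intro q _ hq
    rw [Jm_eq_zero_of_ne hq, zero_mul]
    split <;> rfl
  · intro h
    exact absurd (Finset.mem_univ _) h

lemma Esum {a : Fin 3} {κ : Type} [Fintype κ] [DecidableEq κ] {e : κ → Mat k}
    (hmem : ∀ i, e i ∈ spBlockSet k {(a,a)})
    (hspan : ∀ Z ∈ spBlockSet k {(a,a)}, Z ∈ Submodule.span ℝ (Set.range e))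
    (honb : ∀ i j, spInner k (e i) (e j) = if i = j then 1 else 0)
    (p r : Idx k) :
    ∑ γ, (e γ * e γ) p r
      = if p = r ∧ blk k p = a then
          -(2*(k a : ℂ)+1)/(4*((blockTotal k : ℂ)+1)) else 0 := by
  have hN : ((blockTotal k : ℂ) + 1) ≠ 0 := Ncast_ne
  have hSa : ∀ x ∈ ({(a,a)} : Set (Fin 3 × Fin 3)), Prod.swap x ∈
      ({(a,a)} : Set (Fin 3 × Fin 3)) := by
    intro x hx
    simp only [Set.mem_singleton_iff] at hx
    simp [hx]
  have hsupp : ∀ γ p q, e γ p q ≠ 0 → blk k p = a ∧ blk k q = a := by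
    intro γ p q h
    have := mem_supp (hmem γ) p q h
    simpa [Prod.ext_iff] using this
  simp_rw [Matrix.mul_apply]
  rw [Finset.sum_comm]
  by_cases hpa : blk k p = a
  swap
  · rw [if_neg (by tauto)]
    apply Finset.sum_eq_zero; intro q _
    apply Finset.sum_eq_zero; intro γ _
    by_cases h : e γ p q = 0
    · rw [h, zero_mul]
    · exact absurd (hsupp γ p q h).1 hpa
  by_cases hra : blk k r = a
  swap
  · rw [if_neg (fun hc : p = r ∧ blk k p = a => hra (hc.1 ▸ hpa))]
    apply Finset.sum_eq_zero; intro q _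
    apply Finset.sum_eq_zero; intro γ _
    by_cases h : e γ q r = 0
    · rw [h, mul_zero]
    · exact absurd (hsupp γ q r h).2 hra
  have hq : ∀ q, (∑ γ, e γ p q * e γ q r)
      = if blk k q = a then
          -((if p = r then (1:ℂ) else 0) + Jm k p q * Jm k r q)/(4*((blockTotal k : ℂ)+1))
        else 0 := by
    intro q
    by_cases hqa : blk k q = a
    · rw [if_pos hqa]
      exact moment hSa hmem hspan honb (by simp [hpa, hqa]) (by simp [hqa, hra])
    · rw [if_neg hqa]
      apply Finset.sum_eq_zero; intro γ _
      by_cases h : e γ p q = 0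
      · rw [h, zero_mul]
      · exact absurd (hsupp γ p q h).2 hqa
  rw [Finset.sum_congr rfl fun q _ => hq q]
  have split : ∀ q : Idx k, (if blk k q = a then
        -((if p = r then (1:ℂ) else 0) + Jm k p q * Jm k r q)/(4*((blockTotal k : ℂ)+1))
      else 0)
      = (-(1/(4*((blockTotal k : ℂ)+1)))) *
        ((if p = r then (1:ℂ) else 0) * (if blk k q = a then (1:ℂ) else 0)
          + (if blk k q = a then Jm k p q * Jm k r q else 0)) := by
    intro q
    by_cases h : blk k q = a
    · simp only [if_pos h]
      ring
    · simp only [if_neg h]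
      ring
  rw [Finset.sum_congr rfl fun q _ => split q, ← Finset.mul_sum, Finset.sum_add_distrib, sum_J,
    ← Finset.mul_sum, sum_ind]
  by_cases hpr : p = r
  · subst hpr
    rw [if_pos (⟨rfl, hpa⟩ : p = p ∧ blk k p = a), if_pos (rfl : p = p),
      if_pos (⟨rfl, hpa⟩ : p = p ∧ blk k p = a)]
    ring
  · rw [if_neg (fun hc : p = r ∧ blk k p = a => hpr hc.1), if_neg hpr,
      if_neg (fun hc : p = r ∧ blk k p = a => hpr hc.1)]
    ring

lemma Fsum {a b : Fin 3} (hab : a ≠ b) {ι : Type} [Fintype ι] [DecidableEq ι]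
    {f : ι → Mat k}
    (hmem : ∀ i, f i ∈ spBlockSet k {(a,b),(b,a)})
    (hspan : ∀ Z ∈ spBlockSet k {(a,b),(b,a)}, Z ∈ Submodule.span ℝ (Set.range f))
    (honb : ∀ i j, spInner k (f i) (f j) = if i = j then 1 else 0)
    (p : Idx k) (hpa : blk k p = a) :
    ∑ i, (f i * f i) p p = -(2*(k b : ℂ))/(4*((blockTotal k : ℂ)+1)) := by
  have hN : ((blockTotal k : ℂ) + 1) ≠ 0 := Ncast_ne
  have hSab : ∀ x ∈ ({(a,b),(b,a)} : Set (Fin 3 × Fin 3)), Prod.swap x ∈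
      ({(a,b),(b,a)} : Set (Fin 3 × Fin 3)) := by
    intro x hx
    simp only [Set.mem_insert_iff, Set.mem_singleton_iff] at hx
    rcases hx with rfl | rfl <;> simp
  have hsupp := fun i => mem_supp (hmem i)
  simp_rw [Matrix.mul_apply]
  rw [Finset.sum_comm]
  have hs : ∀ s, (∑ i, f i p s * f i s p)
      = if blk k s = b then -(1:ℂ)/(4*((blockTotal k : ℂ)+1)) else 0 := by
    intro s
    by_cases hsb : blk k s = b
    · rw [if_pos hsb]
      have h1 : (blk k p, blk k s) ∈ ({(a,b),(b,a)} : Set (Fin 3 × Fin 3)) := by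
        simp [hpa, hsb]
      have h2 : (blk k s, blk k p) ∈ ({(a,b),(b,a)} : Set (Fin 3 × Fin 3)) := by
        simp [hpa, hsb]
      rw [moment hSab hmem hspan honb h1 h2]
      rw [if_pos rfl, Jm_zero_of_blk_ne (by rw [hpa, hsb]; exact hab), zero_mul]
      ring_nf
    · rw [if_neg hsb]
      apply Finset.sum_eq_zero; intro i _
      by_cases h : f i p s = 0
      · rw [h, zero_mul]
      · have := hsupp i p s h
        rw [hpa] at this
        simp only [Set.mem_insert_iff, Set.mem_singleton_iff, Prod.mk.injEq] at this
        rcases this with ⟨_, hsb'⟩ | ⟨hab', _⟩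
        · exact absurd hsb' hsb
        · exact absurd hab' hab
  rw [Finset.sum_congr rfl fun s _ => hs s]
  have split : ∀ s : Idx k, (if blk k s = b then -(1:ℂ)/(4*((blockTotal k : ℂ)+1)) else 0)
      = (-(1:ℂ)/(4*((blockTotal k : ℂ)+1))) * (if blk k s = b then (1:ℂ) else 0) := by
    intro s
    by_cases h : blk k s = b <;> simp [h]
  rw [Finset.sum_congr rfl fun s _ => split s, ← Finset.mul_sum, sum_ind]
  ring

end SpAux

open SpAux in
/-- **Lemma 3.2 (the structure constant `A_{(ab)(ab)a}`).**  Let `a ≠ b`, let `{f_i}` be any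
orthonormal basis of `p_{ab}` and `{e_γ}` any orthonormal basis of `p_a`, with respect to
`⟨·,·⟩ = −B`.  Then `Σ_{i,j,γ} ⟨[f_i, f_j], e_γ⟩² = k_a k_b (2 k_a + 1)/(n + 1)`. -/
theorem structure_constant_Aabab_a (k : Fin 3 → ℕ) (hk : ∀ a, 1 ≤ k a)
    (a b : Fin 3) (hab : a ≠ b)
    {ι κ : Type} [Fintype ι] [DecidableEq ι] [Fintype κ] [DecidableEq κ]
    (f : ι → Matrix (Fin (blockTotal k) ⊕ Fin (blockTotal k))
      (Fin (blockTotal k) ⊕ Fin (blockTotal k)) ℂ)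
    (e : κ → Matrix (Fin (blockTotal k) ⊕ Fin (blockTotal k))
      (Fin (blockTotal k) ⊕ Fin (blockTotal k)) ℂ)
    (hf : ∀ i, f i ∈ pOff k a b)
    (hfspan : ∀ Z ∈ pOff k a b, Z ∈ Submodule.span ℝ (Set.range f))
    (hfonb : ∀ i j, spInner k (f i) (f j) = if i = j then 1 else 0)
    (he : ∀ i, e i ∈ pDiag k a)
    (hespan : ∀ Z ∈ pDiag k a, Z ∈ Submodule.span ℝ (Set.range e))
    (heonb : ∀ i j, spInner k (e i) (e j) = if i = j then 1 else 0) :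
    ∑ i : ι, ∑ j : ι, ∑ γ : κ, (spInner k (f i * f j - f j * f i) (e γ)) ^ 2
      = (k a : ℂ) * (k b : ℂ) * (2 * (k a : ℂ) + 1) / ((blockTotal k : ℂ) + 1) := by
  have hN : ((blockTotal k : ℂ) + 1) ≠ 0 := Ncast_ne
  have hf' : ∀ i, f i ∈ spBlockSet k {(a,b),(b,a)} := hf
  have hfspan' : ∀ Z ∈ spBlockSet k {(a,b),(b,a)}, Z ∈ Submodule.span ℝ (Set.range f) := hfspan
  have he' : ∀ i, e i ∈ spBlockSet k {(a,a)} := he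
  have hespan' : ∀ Z ∈ spBlockSet k {(a,a)}, Z ∈ Submodule.span ℝ (Set.range e) := hespan
  have hesupp : ∀ γ p q, e γ p q ≠ 0 → blk k p = a ∧ blk k q = a := by
    intro γ p q h
    have := mem_supp (he' γ) p q h
    simpa [Prod.ext_iff] using this
  have hfsupp : ∀ i p q, f i p q ≠ 0 →
      (blk k p, blk k q) ∈ ({(a,b),(b,a)} : Set (Fin 3 × Fin 3)) :=
    fun i => mem_supp (hf' i)
  have hSab : ∀ x ∈ ({(a,b),(b,a)} : Set (Fin 3 × Fin 3)), Prod.swap x ∈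
      ({(a,b),(b,a)} : Set (Fin 3 × Fin 3)) := by
    intro x hx
    simp only [Set.mem_insert_iff, Set.mem_singleton_iff] at hx
    rcases hx with rfl | rfl <;> simp
  have step_j : ∀ (i : ι) (γ : κ),
      (∑ j : ι, (spInner k (f i * f j - f j * f i) (e γ))^2)
      = 4*((blockTotal k : ℂ)+1) * ((e γ * e γ * (f i * f i)).trace) := by
    intro i γ
    have hWsg : sg k (e γ * f i - f i * e γ) = e γ * f i - f i * e γ :=
      sg_bracket (mem_sg (he' γ)) (mem_sg (hf' i))
    have hWspan : (e γ * f i - f i * e γ) ∈ Submodule.span ℂ (Set.range f) :=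
      mem_spanC hSab hfspan' (bracket_supp hab (hesupp γ) (hfsupp i)) hWsg
    have hterm : ∀ j, (spInner k (f i * f j - f j * f i) (e γ))^2
        = spInner k (e γ * f i - f i * e γ) (f j)
          * spInner k (e γ * f i - f i * e γ) (f j) := by
      intro j
      rw [inv_id (f i) (f j) (e γ), spInner_symm, sq]
    rw [Finset.sum_congr rfl fun j _ => hterm j, repro hfonb _ hWspan]
    exact bracket_inner (e γ) (f i) (efe_zero hab (hesupp γ) (hfsupp i))
  have trace_expand : ∀ (A B : Mat k), (A*B).trace = ∑ p, ∑ r, A p r * B r p := by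
    intro A B
    unfold Matrix.trace
    simp [Matrix.diag, Matrix.mul_apply]
  -- re-associate and swap sums
  calc ∑ i : ι, ∑ j : ι, ∑ γ : κ, (spInner k (f i * f j - f j * f i) (e γ)) ^ 2
      = ∑ i : ι, ∑ γ : κ, 4*((blockTotal k : ℂ)+1) * ((e γ * e γ * (f i * f i)).trace) := by
        refine Finset.sum_congr rfl fun i _ => ?_
        rw [Finset.sum_comm]
        exact Finset.sum_congr rfl fun γ _ => step_j i γ
    _ = 4*((blockTotal k : ℂ)+1)
          * ∑ i : ι, ∑ γ : κ, ((e γ * e γ * (f i * f i)).trace) := by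
        rw [Finset.mul_sum]
        exact Finset.sum_congr rfl fun i _ => by rw [Finset.mul_sum]
    _ = 4*((blockTotal k : ℂ)+1)
          * ∑ p, ∑ r, (∑ γ, (e γ * e γ) p r) * (∑ i, (f i * f i) r p) := by
        congr 1
        simp_rw [trace_expand]
        have h1 : ∀ i : ι, (∑ γ : κ, ∑ p, ∑ r, (e γ * e γ) p r * (f i * f i) r p)
            = ∑ p, ∑ r, ∑ γ : κ, (e γ * e γ) p r * (f i * f i) r p := by
          intro i
          rw [Finset.sum_comm]
          exact Finset.sum_congr rfl fun p _ => Finset.sum_comm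
        rw [Finset.sum_congr rfl fun i _ => h1 i, Finset.sum_comm]
        refine Finset.sum_congr rfl fun p _ => ?_
        rw [Finset.sum_comm]
        refine Finset.sum_congr rfl fun r _ => ?_
        calc ∑ i : ι, ∑ γ : κ, (e γ * e γ) p r * (f i * f i) r p
            = ∑ i : ι, (∑ γ : κ, (e γ * e γ) p r) * (f i * f i) r p :=
              Finset.sum_congr rfl fun i _ => (Finset.sum_mul _ _ _).symm
          _ = (∑ γ : κ, (e γ * e γ) p r) * ∑ i : ι, (f i * f i) r p :=
              (Finset.mul_sum _ _ _).symm
    _ = 4*((blockTotal k : ℂ)+1)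
          * ∑ p, (if blk k p = a then
              (-(2*(k a : ℂ)+1)/(4*((blockTotal k : ℂ)+1))) * (∑ i, (f i * f i) p p)
            else 0) := by
        congr 1
        refine Finset.sum_congr rfl fun p _ => ?_
        rw [Finset.sum_eq_single p]
        · rw [Esum he' hespan' heonb]
          by_cases hpa : blk k p = a
          · rw [if_pos ⟨rfl, hpa⟩, if_pos hpa]
          · rw [if_neg (fun hc : p = p ∧ blk k p = a => hpa hc.2), if_neg hpa, zero_mul]
        · intro r _ hrp
          rw [Esum he' hespan' heonb,
            if_neg (fun hc : p = r ∧ blk k p = a => hrp hc.1.symm), zero_mul]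
        · intro h
          exact absurd (Finset.mem_univ _) h
    _ = 4*((blockTotal k : ℂ)+1)
          * ∑ p, (if blk k p = a then
              (-(2*(k a : ℂ)+1)/(4*((blockTotal k : ℂ)+1)))
                * (-(2*(k b : ℂ))/(4*((blockTotal k : ℂ)+1)))
            else 0) := by
        congr 1
        refine Finset.sum_congr rfl fun p _ => ?_
        by_cases hpa : blk k p = a
        · rw [if_pos hpa, if_pos hpa, Fsum hab hf' hfspan' hfonb p hpa]
        · rw [if_neg hpa, if_neg hpa]
    _ = (k a : ℂ) * (k b : ℂ) * (2 * (k a : ℂ) + 1) / ((blockTotal k : ℂ) + 1) := by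
        have hsplit : ∀ p : Idx k, (if blk k p = a then
              (-(2*(k a : ℂ)+1)/(4*((blockTotal k : ℂ)+1)))
                * (-(2*(k b : ℂ))/(4*((blockTotal k : ℂ)+1)))
            else 0)
            = ((-(2*(k a : ℂ)+1)/(4*((blockTotal k : ℂ)+1)))
                * (-(2*(k b : ℂ))/(4*((blockTotal k : ℂ)+1))))
              * (if blk k p = a then (1:ℂ) else 0) := by
          intro p
          by_cases h : blk k p = a <;> simp [h]
        rw [Finset.sum_congr rfl fun p _ => hsplit p, ← Finset.mul_sum, sum_ind]
        generalize hx : ((blockTotal k : ℂ) + 1) = x at hN ⊢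
        field_simp
        ring
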